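/- Let (Γ, 𝔊, η) be a minimal non-Kneser triple in which both Γ and 𝔊 are abelian. Then: (1) 𝔊 is an abelian p-group for some prime p, Γ acts faithfully on 𝔊, and η is injective; (2) the following are equivalent: Γ is a p-group; 𝔊^Γ ≠ {0}; 𝔊^Γ is cyclic of order p; |𝔊| = p·|Γ|, where 𝔊^Γ := {g ∈ 𝔊 : γ•g = g for all γ ∈ Γ}; (3) 𝔊 has a unique minimal nonzero Γ-invariant subgroup. -/

import Mathlib

set_option linter.unusedVariables false
set_option linter.unusedSectionVars false
open Function MulAction QuotientGroup
namespace MNK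


variable {Γ 𝔊 : Type*} [CommGroup Γ] [CommGroup 𝔊] [MulDistribMulAction Γ 𝔊]

theorem coc_one (η : Γ → 𝔊) (hcoc : ∀ σ τ : Γ, η (σ * τ) = η σ * σ • η τ) : η 1 = 1 := by
  have h := hcoc 1 1
  rw [mul_one, one_smul] at h
  exact (left_eq_mul.mp h)

theorem coc_comm (η : Γ → 𝔊) (hcoc : ∀ σ τ : Γ, η (σ * τ) = η σ * σ • η τ) (σ τ : Γ) :
    η σ * σ • η τ = η τ * τ • η σ := by
  rw [← hcoc, ← hcoc, mul_comm σ τ]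

theorem coc_inv (η : Γ → 𝔊) (hcoc : ∀ σ τ : Γ, η (σ * τ) = η σ * σ • η τ) (σ : Γ) :
    η σ⁻¹ = (σ⁻¹ • η σ)⁻¹ := by
  have h := hcoc σ⁻¹ σ
  rw [inv_mul_cancel, coc_one η hcoc] at h
  exact eq_inv_of_mul_eq_one_left h.symm

/-- The subgroup of elements of `𝔊` fixed by a single `x`. -/
def fixBy (x : Γ) : Subgroup 𝔊 where
  carrier := {g | x • g = g}
  one_mem' := smul_one x
  mul_mem' := fun {a b} ha hb => by
    simp only [Set.mem_setOf_eq] at *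
    rw [smul_mul', ha, hb]
  inv_mem' := fun {a} ha => by
    simp only [Set.mem_setOf_eq] at *
    rw [smul_inv', ha]

theorem fixes_all (η : Γ → 𝔊) (hgen : Subgroup.closure (Set.range η) = ⊤) {x : Γ}
    (hx : ∀ σ : Γ, x • η σ = η σ) (g : 𝔊) : x • g = g := by
  have h : Subgroup.closure (Set.range η) ≤ fixBy x := by
    apply (Subgroup.closure_le _).mpr
    rintro _ ⟨σ, rfl⟩
    exact hx σ
  rw [hgen] at h
  exact h (Subgroup.mem_top g)

theorem ker_eta (η : Γ → 𝔊) (hcoc : ∀ σ τ : Γ, η (σ * τ) = η σ * σ • η τ)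
    (hgen : Subgroup.closure (Set.range η) = ⊤)
    (hnorm : ∀ x : Γ, (∀ g : 𝔊, x • g = g) → η x = 1 → x = 1)
    {κ : Γ} (hκ : η κ = 1) : κ = 1 := by
  refine hnorm κ ?_ hκ
  apply fixes_all η hgen
  intro σ
  have h := coc_comm η hcoc σ κ
  rw [hκ, smul_one, mul_one, one_mul] at h
  exact h.symm

theorem eta_inj (η : Γ → 𝔊) (hcoc : ∀ σ τ : Γ, η (σ * τ) = η σ * σ • η τ)
    (hgen : Subgroup.closure (Set.range η) = ⊤)
    (hnorm : ∀ x : Γ, (∀ g : 𝔊, x • g = g) → η x = 1 → x = 1) :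
    Function.Injective η := by
  intro σ τ h
  have h2 := hcoc σ (σ⁻¹ * τ)
  rw [mul_inv_cancel_left, ← h, left_eq_mul] at h2
  have h3 : η (σ⁻¹ * τ) = 1 := by
    have := congrArg (σ⁻¹ • ·) h2
    simpa [inv_smul_smul] using this
  have h4 := ker_eta η hcoc hgen hnorm h3
  rwa [inv_mul_eq_one] at h4

theorem smul_eta_fixer (η : Γ → 𝔊) (hcoc : ∀ σ τ : Γ, η (σ * τ) = η σ * σ • η τ)
    {y : Γ} (hy : ∀ g : 𝔊, y • g = g) (γ : Γ) : γ • η y = η y := by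
  have h := coc_comm η hcoc γ y
  rw [hy (η γ), mul_comm (η y) (η γ)] at h
  exact mul_left_cancel h

/-- image of the "acting trivially" subgroup under `η`. -/
def fixImage (η : Γ → 𝔊) (hcoc : ∀ σ τ : Γ, η (σ * τ) = η σ * σ • η τ) : Subgroup 𝔊 where
  carrier := η '' {y : Γ | ∀ g : 𝔊, y • g = g}
  one_mem' := ⟨1, fun g => one_smul Γ g, coc_one η hcoc⟩
  mul_mem' := by
    rintro _ _ ⟨x, hx, rfl⟩ ⟨y, hy, rfl⟩
    exact ⟨x * y, fun g => by rw [mul_smul, hy, hx], by rw [hcoc x y, hx (η y)]⟩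
  inv_mem' := by
    rintro _ ⟨x, hx, rfl⟩
    have hxi : ∀ g : 𝔊, x⁻¹ • g = g := fun g => by
      conv_lhs => rw [← hx g]
      rw [inv_smul_smul]
    exact ⟨x⁻¹, hxi, by rw [coc_inv η hcoc, hxi (η x)]⟩

theorem faithful (η : Γ → 𝔊) (hcoc : ∀ σ τ : Γ, η (σ * τ) = η σ * σ • η τ)
    (hgen : Subgroup.closure (Set.range η) = ⊤)
    (hns : ¬ Function.Surjective η)
    (hmin : ∀ a : Subgroup 𝔊, a.Normal → (∀ (γ : Γ) (g : 𝔊), g ∈ a → γ • g ∈ a) → a ≠ ⊥ →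
        Function.Surjective (fun γ : Γ => (QuotientGroup.mk (η γ) : 𝔊 ⧸ a)))
    (hnorm : ∀ x : Γ, (∀ g : 𝔊, x • g = g) → η x = 1 → x = 1) :
    ∀ x : Γ, (∀ g : 𝔊, x • g = g) → x = 1 := by
  intro x hx
  by_cases hE : fixImage η hcoc = ⊥
  · refine hnorm x hx ?_
    have : η x ∈ fixImage η hcoc := ⟨x, hx, rfl⟩
    rw [hE] at this
    exact Subgroup.mem_bot.mp this
  · exfalso
    apply hns
    have hEinv : ∀ (γ : Γ) (g : 𝔊), g ∈ fixImage η hcoc → γ • g ∈ fixImage η hcoc := by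
      rintro γ _ ⟨y, hy, rfl⟩
      rw [smul_eta_fixer η hcoc hy γ]
      exact ⟨y, hy, rfl⟩
    have hsurj := hmin (fixImage η hcoc) inferInstance hEinv hE
    intro g
    obtain ⟨γ, hγ⟩ := hsurj (QuotientGroup.mk g)
    have hmem : (η γ)⁻¹ * g ∈ fixImage η hcoc := QuotientGroup.eq.mp hγ
    obtain ⟨y, hy, hyeq⟩ := hmem
    refine ⟨γ * y, ?_⟩
    rw [hcoc, smul_eta_fixer η hcoc hy γ, hyeq, mul_inv_cancel_left]

/-- The "kernel modulo an ideal" subgroup of `Γ`. -/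
def Kker (η : Γ → 𝔊) (hcoc : ∀ σ τ : Γ, η (σ * τ) = η σ * σ • η τ) (a : Subgroup 𝔊)
    (hainv : ∀ (γ : Γ) (g : 𝔊), g ∈ a → γ • g ∈ a) : Subgroup Γ where
  carrier := {γ | η γ ∈ a}
  one_mem' := by simp only [Set.mem_setOf_eq, coc_one η hcoc]; exact a.one_mem
  mul_mem' := by
    intro σ τ hσ hτ
    simp only [Set.mem_setOf_eq] at *
    rw [hcoc]
    exact mul_mem hσ (hainv σ _ hτ)
  inv_mem' := by
    intro σ hσ
    simp only [Set.mem_setOf_eq] at *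
    rw [coc_inv η hcoc]
    exact inv_mem (hainv σ⁻¹ _ hσ)

theorem card_eq_K_mul_quot [Finite Γ] [Finite 𝔊] (η : Γ → 𝔊)
    (hcoc : ∀ σ τ : Γ, η (σ * τ) = η σ * σ • η τ)
    (a : Subgroup 𝔊) (hainv : ∀ (γ : Γ) (g : 𝔊), g ∈ a → γ • g ∈ a)
    (hsurj : Function.Surjective (fun γ : Γ => (QuotientGroup.mk (η γ) : 𝔊 ⧸ a))) :
    Nat.card Γ = Nat.card (𝔊 ⧸ a) * Nat.card (Kker η hcoc a hainv) := by
  set K := Kker η hcoc a hainv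
  have hbij : Function.Bijective (fun q : Γ ⧸ K =>
      Quotient.liftOn' q (fun γ => (QuotientGroup.mk (η γ) : 𝔊 ⧸ a)) ?_) := ?_
  case refine_1 =>
    intro σ τ hστ
    have hmem : σ⁻¹ * τ ∈ K := QuotientGroup.leftRel_apply.mp hστ
    have : η τ = η σ * σ • η (σ⁻¹ * τ) := by rw [← hcoc, mul_inv_cancel_left]
    apply QuotientGroup.eq.mpr
    rw [this]
    simpa using hainv σ _ hmem
  case refine_2 =>
    constructor
    · intro q1 q2
      induction q1 using Quotient.inductionOn'
      induction q2 using Quotient.inductionOn'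
      rename_i σ τ
      intro h
      simp only [Quotient.liftOn'_mk''] at h
      have hmem : (η σ)⁻¹ * η τ ∈ a := QuotientGroup.eq.mp h
      apply Quotient.sound'
      apply QuotientGroup.leftRel_apply.mpr
      show η (σ⁻¹ * τ) ∈ a
      have : η (σ⁻¹ * τ) = σ⁻¹ • ((η σ)⁻¹ * η τ) := by
        rw [hcoc, coc_inv η hcoc, smul_mul', smul_inv']
      rw [this]
      exact hainv _ _ hmem
    · intro s
      obtain ⟨γ, hγ⟩ := hsurj s
      exact ⟨QuotientGroup.mk γ, hγ⟩
  have hcards : Nat.card (Γ ⧸ K) = Nat.card (𝔊 ⧸ a) := Nat.card_eq_of_bijective _ hbij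
  rw [← hcards]
  exact Subgroup.card_eq_card_quotient_mul_card_subgroup K



section PrimeCompl

variable {G : Type*} [CommGroup G]

/-- elements of order prime to `q`. -/
def primeCompl (q : ℕ) (hq : q.Prime) : Subgroup G where
  carrier := {g | ¬ q ∣ orderOf g}
  one_mem' := by
    simp only [Set.mem_setOf_eq, orderOf_one, Nat.dvd_one]
    exact hq.ne_one
  mul_mem' := by
    intro a b ha hb hdvd
    have h1 : orderOf (a * b) ∣ Nat.lcm (orderOf a) (orderOf b) :=
      (Commute.all a b).orderOf_mul_dvd_lcm
    have h2 : q ∣ orderOf a * orderOf b :=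
      (hdvd.trans h1).trans (Nat.lcm_dvd_mul _ _)
    rcases (Nat.Prime.dvd_mul hq).mp h2 with h | h
    · exact ha h
    · exact hb h
  inv_mem' := by
    intro a ha
    simpa only [Set.mem_setOf_eq, orderOf_inv] using ha

theorem mem_primeCompl {q : ℕ} (hq : q.Prime) {g : G} :
    g ∈ primeCompl q hq ↔ ¬ q ∣ orderOf g := Iff.rfl

theorem not_dvd_card_primeCompl [Finite G] (q : ℕ) (hq : q.Prime) :
    ¬ q ∣ Nat.card (primeCompl (G := G) q hq) := by
  intro hdvd
  haveI : Fact q.Prime := ⟨hq⟩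
  obtain ⟨x, hx⟩ := exists_prime_orderOf_dvd_card' q hdvd
  have hco : orderOf (x : G) = orderOf x :=
    orderOf_injective (primeCompl q hq).subtype Subtype.coe_injective x
  exact x.2 (by rw [hco, hx])

theorem quot_primeCompl_isP [Finite G] (q : ℕ) (hq : q.Prime) :
    IsPGroup q (G ⧸ primeCompl (G := G) q hq) := by
  intro x
  induction x using QuotientGroup.induction_on with
  | H g =>
  refine ⟨(orderOf g).factorization q, ?_⟩
  rw [← QuotientGroup.mk_pow, QuotientGroup.eq_one_iff]
  show ¬ q ∣ orderOf (g ^ q ^ (orderOf g).factorization q)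
  have ho : orderOf g ≠ 0 := (orderOf_pos g).ne'
  rw [orderOf_pow g, Nat.gcd_eq_right (Nat.ordProj_dvd _ _)]
  exact Nat.not_dvd_ordCompl hq ho

/-- decomposition into p'-part and p-part in a finite commutative group -/
theorem prime_decomp [Finite G] (p : ℕ) (hp : p.Prime) (γ : G) :
    ∃ h π : G, γ = h * π ∧ ¬ p ∣ orderOf h ∧ (∃ k : ℕ, π ^ p ^ k = 1) := by
  set o := orderOf γ with ho
  have ho0 : o ≠ 0 := (orderOf_pos γ).ne'
  set A := p ^ o.factorization p with hA
  set B := o / A with hB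
  have hAB : A * B = o := Nat.ordProj_mul_ordCompl_eq_self o p
  have hcop : Nat.Coprime A B := by
    apply Nat.Coprime.pow_left
    exact Nat.coprime_ordCompl hp ho0
  obtain ⟨e₁, he₁A, he₁B⟩ := Nat.chineseRemainder hcop 1 0
  obtain ⟨e₂, he₂A, he₂B⟩ := Nat.chineseRemainder hcop 0 1
  refine ⟨γ ^ e₂, γ ^ e₁, ?_, ?_, ?_⟩
  · rw [← pow_add]
    have hmod : e₂ + e₁ ≡ 1 [MOD o] := by
      rw [← hAB]
      apply (Nat.modEq_and_modEq_iff_modEq_mul hcop).mp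
      constructor
      · simpa using Nat.ModEq.add he₂A he₁A
      · simpa using Nat.ModEq.add he₂B he₁B
    have hpow := (pow_eq_pow_iff_modEq (x := γ)).mpr hmod
    rw [pow_one] at hpow
    exact hpow.symm
  · have hB1 : (γ ^ e₂) ^ B = 1 := by
      obtain ⟨t, ht⟩ := (Nat.modEq_zero_iff_dvd).mp he₂A
      rw [← pow_mul]
      have he : e₂ * B = o * t := by rw [ht, ← hAB]; ring
      rw [he, pow_mul, pow_orderOf_eq_one, one_pow]
    have hdvd : orderOf (γ ^ e₂) ∣ B := orderOf_dvd_of_pow_eq_one hB1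
    intro hp'
    exact Nat.not_dvd_ordCompl hp ho0 (hp'.trans hdvd)
  · refine ⟨o.factorization p, ?_⟩
    obtain ⟨t, ht⟩ := (Nat.modEq_zero_iff_dvd).mp he₁B
    rw [show p ^ o.factorization p = A from rfl, ← pow_mul]
    have he : e₁ * A = o * t := by rw [ht, ← hAB]; ring
    rw [he, pow_mul, pow_orderOf_eq_one, one_pow]

end PrimeCompl



variable {Γ 𝔊 : Type*} [CommGroup Γ] [CommGroup 𝔊] [MulDistribMulAction Γ 𝔊]

theorem orderOf_smul (γ : Γ) (g : 𝔊) : orderOf (γ • g) = orderOf g := by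
  apply Nat.dvd_antisymm
  · apply orderOf_dvd_of_pow_eq_one
    rw [← smul_pow', pow_orderOf_eq_one, smul_one]
  · conv_lhs => rw [show g = γ⁻¹ • (γ • g) by rw [inv_smul_smul]]
    apply orderOf_dvd_of_pow_eq_one
    rw [← smul_pow', pow_orderOf_eq_one, smul_one]

theorem nontrivial_G (η : Γ → 𝔊) (hns : ¬ Function.Surjective η) : Nontrivial 𝔊 := by
  by_contra h
  rw [not_nontrivial_iff_subsingleton] at h
  exact hns fun b => ⟨1, Subsingleton.elim _ _⟩

theorem card_lt [Finite Γ] [Finite 𝔊] (η : Γ → 𝔊) (hinj : Function.Injective η)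
    (hns : ¬ Function.Surjective η) : Nat.card Γ < Nat.card 𝔊 := by
  refine lt_of_le_of_ne (Nat.card_le_card_of_injective η hinj) fun h => ?_
  exact hns ((Nat.bijective_iff_injective_and_card η).mpr ⟨hinj, h⟩).surjective


/-- Induced action on an invariant subgroup. -/
def subAction (a : Subgroup 𝔊) (hainv : ∀ (γ : Γ) (g : 𝔊), g ∈ a → γ • g ∈ a) :
    MulDistribMulAction Γ a where
  smul γ x := ⟨γ • (x : 𝔊), hainv γ x x.2⟩
  one_smul x := Subtype.ext (one_smul Γ (x : 𝔊))
  mul_smul γ δ x := Subtype.ext (mul_smul γ δ (x : 𝔊))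
  smul_mul γ x y := Subtype.ext (smul_mul' γ (x : 𝔊) (y : 𝔊))
  smul_one γ := Subtype.ext (smul_one γ)

/-- Induced action on the quotient by an invariant subgroup. -/
def quotAction (a : Subgroup 𝔊) (hainv : ∀ (γ : Γ) (g : 𝔊), g ∈ a → γ • g ∈ a) :
    MulDistribMulAction Γ (𝔊 ⧸ a) where
  smul γ := QuotientGroup.map a a (MulDistribMulAction.toMonoidHom 𝔊 γ)
    (fun g hg => by simpa using hainv γ g hg)
  one_smul q := by
    induction q using QuotientGroup.induction_on with
    | H g => show QuotientGroup.map a a _ _ _ = _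
             rw [QuotientGroup.map_mk]
             simp
  mul_smul γ δ q := by
    induction q using QuotientGroup.induction_on with
    | H g => show QuotientGroup.map a a _ _ _ = QuotientGroup.map a a _ _ (QuotientGroup.map a a _ _ _)
             rw [QuotientGroup.map_mk, QuotientGroup.map_mk, QuotientGroup.map_mk]
             simp [mul_smul]
  smul_mul γ q r := by
    induction q using QuotientGroup.induction_on with
    | H g =>
      induction r using QuotientGroup.induction_on with
      | H h => show QuotientGroup.map a a _ _ _ = QuotientGroup.map a a _ _ _ * QuotientGroup.map a a _ _ _
               rw [← QuotientGroup.mk_mul, QuotientGroup.map_mk, QuotientGroup.map_mk,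
                 QuotientGroup.map_mk, ← QuotientGroup.mk_mul]
               simp [smul_mul']
  smul_one γ := by
    show QuotientGroup.map a a _ _ 1 = 1
    simp

theorem quot_smul_mk (a : Subgroup 𝔊) (hainv : ∀ (γ : Γ) (g : 𝔊), g ∈ a → γ • g ∈ a)
    (γ : Γ) (g : 𝔊) :
    (letI := quotAction a hainv
     γ • (QuotientGroup.mk g : 𝔊 ⧸ a)) = QuotientGroup.mk (γ • g) := by
  letI := quotAction a hainv
  show QuotientGroup.map a a _ _ _ = _
  rw [QuotientGroup.map_mk]
  simp

theorem sub_smul_mk (a : Subgroup 𝔊) (hainv : ∀ (γ : Γ) (g : 𝔊), g ∈ a → γ • g ∈ a)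
    (γ : Γ) (x : a) :
    ((letI := subAction a hainv
      γ • x : a) : 𝔊) = γ • (x : 𝔊) := rfl

/-- p-group fixed-point existence. -/
theorem exists_fixed {M : Type*} [Group M] [Finite M] [MulDistribMulAction Γ M]
    {p : ℕ} (hp : p.Prime) (hM : IsPGroup p M) (hnt : Nontrivial M)
    (Δ : Subgroup Γ) (hΔ : IsPGroup p Δ) :
    ∃ s : M, s ≠ 1 ∧ ∀ δ ∈ Δ, δ • s = s := by
  haveI : Fact p.Prime := ⟨hp⟩
  have hcard := hΔ.card_modEq_card_fixedPoints (α := M)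
  have hpM : p ∣ Nat.card M := by
    obtain ⟨n, hn⟩ := IsPGroup.exists_card_eq hM
    rcases Nat.eq_zero_or_pos n with rfl | hn0
    · rw [pow_zero] at hn
      exact absurd hn (Finite.one_lt_card_iff_nontrivial.mpr hnt).ne'
    · exact hn ▸ dvd_pow_self p hn0.ne'
  have h1mem : (1 : M) ∈ fixedPoints Δ M := fun δ => smul_one δ
  have hpos : 0 < Nat.card (fixedPoints Δ M) := by
    haveI : Nonempty (fixedPoints Δ M) := ⟨⟨1, h1mem⟩⟩
    exact Nat.card_pos
  have hdvdF : p ∣ Nat.card (fixedPoints Δ M) :=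
    (Nat.modEq_zero_iff_dvd).mp (hcard.symm.trans ((Nat.modEq_zero_iff_dvd).mpr hpM))
  have hlt : 1 < Nat.card (fixedPoints Δ M) :=
    lt_of_lt_of_le hp.one_lt (Nat.le_of_dvd hpos hdvdF)
  have : Nontrivial (fixedPoints Δ M) := Finite.one_lt_card_iff_nontrivial.mp hlt
  obtain ⟨s, hs⟩ := exists_ne (⟨1, h1mem⟩ : fixedPoints Δ M)
  refine ⟨(s : M), ?_, ?_⟩
  · intro h
    exact hs (Subtype.ext h)
  · intro δ hδ
    have := s.2 ⟨δ, hδ⟩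
    simpa [Subgroup.smul_def] using this

theorem exists_p [Finite Γ] [Finite 𝔊] (η : Γ → 𝔊)
    (hcoc : ∀ σ τ : Γ, η (σ * τ) = η σ * σ • η τ)
    (hmin : ∀ a : Subgroup 𝔊, a.Normal → (∀ (γ : Γ) (g : 𝔊), g ∈ a → γ • g ∈ a) → a ≠ ⊥ →
        Function.Surjective (fun γ : Γ => (QuotientGroup.mk (η γ) : 𝔊 ⧸ a)))
    (hlt : Nat.card Γ < Nat.card 𝔊) (hnt : Nontrivial 𝔊) :
    ∃ p : ℕ, p.Prime ∧ IsPGroup p 𝔊 := by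
  set n := Nat.card 𝔊 with hn
  set m := Nat.card Γ with hm
  have hn0 : n ≠ 0 := Nat.card_pos.ne'
  have hm0 : m ≠ 0 := Nat.card_pos.ne'
  have hn1 : n ≠ 1 := by
    rw [hn]
    exact (Finite.one_lt_card_iff_nontrivial.mpr hnt).ne'
  obtain ⟨p, hp, hpn⟩ := Nat.exists_prime_and_dvd hn1
  refine ⟨p, hp, ?_⟩
  -- claim: p is the unique prime dividing n
  have huniq : ∀ q : ℕ, q.Prime → q ∣ n → q = p := by
    by_contra hq'
    push_neg at hq'
    obtain ⟨q, hq, hqn, hqp⟩ := hq'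
    -- two distinct primes p q divide n; derive n ∣ m
    have key : ∀ r : ℕ, r.Prime → r ∣ n → n.factorization r ≤ m.factorization r := by
      intro r hr hrn
      -- find a prime r' ≠ r dividing n
      have hex : ∃ r' : ℕ, r'.Prime ∧ r' ∣ n ∧ r' ≠ r := by
        rcases eq_or_ne r p with rfl | hne
        · exact ⟨q, hq, hqn, hqp⟩
        · exact ⟨p, hp, hpn, fun h => hne h.symm⟩
      obtain ⟨r', hr', hr'n, hr'r⟩ := hex
      haveI : Fact r'.Prime := ⟨hr'⟩
      -- the r-prime-complement is a nontrivial ideal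
      set t := primeCompl (G := 𝔊) r hr with ht
      have htne : t ≠ ⊥ := by
        obtain ⟨x, hx⟩ := exists_prime_orderOf_dvd_card' (G := 𝔊) r' hr'n
        have hxt : x ∈ t := by
          rw [ht, mem_primeCompl hr]
          rw [hx]
          rw [Nat.prime_dvd_prime_iff_eq hr hr']
          exact fun h => hr'r h.symm
        have hx1 : x ≠ 1 := by
          intro h
          rw [h, orderOf_one] at hx
          exact hr'.ne_one hx.symm
        intro hbot
        rw [hbot, Subgroup.mem_bot] at hxt
        exact hx1 hxt
      have htinv : ∀ (γ : Γ) (g : 𝔊), g ∈ t → γ • g ∈ t := by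
        intro γ g hg
        rw [ht, mem_primeCompl hr] at *
        rwa [orderOf_smul]
      have hk := card_eq_K_mul_quot η hcoc t htinv (hmin t inferInstance htinv htne)
      -- n = card t * card (𝔊 ⧸ t), r ∤ card t, card (𝔊 ⧸ t) = r ^ s
      have hnfac : n = Nat.card (𝔊 ⧸ t) * Nat.card t :=
        Subgroup.card_eq_card_quotient_mul_card_subgroup t
      obtain ⟨s, hs⟩ : ∃ s, Nat.card (𝔊 ⧸ t) = r ^ s := by
        haveI : Fact r.Prime := ⟨hr⟩
        exact IsPGroup.exists_card_eq (quot_primeCompl_isP r hr)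
      have hqt : ¬ r ∣ Nat.card t := not_dvd_card_primeCompl r hr
      have hct0 : Nat.card t ≠ 0 := Nat.card_pos.ne'
      have hfac : n.factorization r = s := by
        have hns' : n = r ^ s * Nat.card t := by rw [hnfac, hs]
        rw [hns', Nat.factorization_mul (pow_ne_zero s hr.pos.ne') hct0, Finsupp.add_apply,
          hr.factorization_pow, Finsupp.single_eq_same,
          Nat.factorization_eq_zero_of_not_dvd hqt, add_zero]
      have hdvd : r ^ s ∣ m := ⟨Nat.card (Kker η hcoc t htinv), by rw [hm, hk, hs]⟩
      rw [hfac]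
      exact (Nat.Prime.pow_dvd_iff_le_factorization hr hm0).mp hdvd
    have hnm : n ∣ m := by
      rw [← Nat.factorization_le_iff_dvd hn0 hm0]
      intro r
      by_cases hr : r.Prime
      · by_cases hrn : r ∣ n
        · exact key r hr hrn
        · simp [Nat.factorization_eq_zero_of_not_dvd hrn]
      · simp [Nat.factorization_eq_zero_of_not_prime _ hr]
    exact absurd (Nat.le_of_dvd (Nat.pos_of_ne_zero hm0) hnm) (not_le.mpr hlt)
  have hcard : n = p ^ n.primeFactorsList.length :=
    Nat.eq_prime_pow_of_unique_prime_dvd hn0 (fun {d} hd hdn => huniq d hd hdn)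
  exact IsPGroup.of_card hcard



theorem no_surjective_cocycle {S : Type*} [CommGroup S] [Finite S] [Finite Γ]
    [MulDistribMulAction Γ S] {p : ℕ} (hp : p.Prime) (hS : IsPGroup p S) (hnt : Nontrivial S)
    (ηS : Γ → S) (hcoc : ∀ σ τ : Γ, ηS (σ * τ) = ηS σ * σ • ηS τ)
    (hsurj : Function.Surjective ηS)
    (hPtriv : ∀ π : Γ, (∃ k : ℕ, π ^ p ^ k = 1) → ∀ s : S, π • s = s)
    (hHfix : ∀ s : S, (∀ h : Γ, ¬ p ∣ orderOf h → h • s = s) → s = 1) : False := by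
  classical
  haveI : Fact p.Prime := ⟨hp⟩
  have step1 : ∀ π : Γ, (∃ k : ℕ, π ^ p ^ k = 1) → ηS π = 1 := by
    intro π hπ
    apply hHfix
    intro h _
    have hid := coc_comm ηS hcoc h π
    rw [hPtriv π hπ (ηS h), mul_comm (ηS π) (ηS h)] at hid
    exact mul_left_cancel hid
  have step2 : ∀ s : S, ∃ h : Γ, ¬ p ∣ orderOf h ∧ ηS h = s := by
    intro s
    obtain ⟨γ, rfl⟩ := hsurj s
    obtain ⟨h, π, rfl, hh, hπ⟩ := prime_decomp p hp γ
    exact ⟨h, hh, by rw [hcoc, step1 π hπ, smul_one, mul_one]⟩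
  set H := primeCompl (G := Γ) p hp with hH
  letI : Fintype H := Fintype.ofFinite _
  set u := Fintype.card H with hu
  have hpu : ¬ p ∣ u := by
    have := not_dvd_card_primeCompl (G := Γ) p hp
    rwa [Nat.card_eq_fintype_card] at this
  set N := ∏ h : H, ηS (h : Γ) with hN
  have key : ∀ σ : Γ, ¬ p ∣ orderOf σ → N = ηS σ ^ u * σ • N := by
    intro σ hσ'
    have hσ : σ ∈ H := (mem_primeCompl hp).mpr hσ'
    have h1 : ∏ h : H, ηS (σ * (h : Γ)) = N := by
      rw [hN]
      apply Fintype.prod_equiv (Equiv.mulLeft (⟨σ, hσ⟩ : H))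
      intro h
      rfl
    have h2 : ∏ h : H, ηS (σ * (h : Γ)) = ηS σ ^ u * σ • N := by
      calc ∏ h : H, ηS (σ * (h : Γ)) = ∏ h : H, (ηS σ * σ • ηS (h : Γ)) :=
            Finset.prod_congr rfl (fun h _ => hcoc σ (h : Γ))
        _ = (∏ _h : H, ηS σ) * ∏ h : H, σ • ηS (h : Γ) := Finset.prod_mul_distrib
        _ = ηS σ ^ u * σ • N := by
            rw [Finset.prod_const, Finset.card_univ]
            congr 1
            rw [hN]
            exact (map_prod (MulDistribMulAction.toMonoidHom S σ) _ _).symm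
    exact h1.symm.trans h2
  have hcop : p.Coprime u := (Nat.Prime.coprime_iff_not_dvd hp).mpr hpu
  set ψ := hS.powEquiv hcop with hψ
  set c := ψ.symm N⁻¹ with hc
  have hcu : c ^ u = N⁻¹ := by
    have h' := ψ.apply_symm_apply N⁻¹
    rwa [hψ, IsPGroup.powEquiv_apply] at h'
  have hcob : ∀ σ : Γ, ¬ p ∣ orderOf σ → ηS σ = σ • c * c⁻¹ := by
    intro σ hσ
    have hk := key σ hσ
    have h3 : ηS σ ^ u = N * (σ • N)⁻¹ := by
      rw [eq_mul_inv_iff_mul_eq]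
      exact hk.symm
    have h4 : (σ • c * c⁻¹) ^ u = N * (σ • N)⁻¹ := by
      rw [mul_pow, inv_pow, ← smul_pow', hcu, smul_inv', inv_inv, mul_comm]
    have h5 : ηS σ ^ u = (σ • c * c⁻¹) ^ u := h3.trans h4.symm
    apply ψ.injective
    rw [hψ, IsPGroup.powEquiv_apply, IsPGroup.powEquiv_apply]
    exact h5
  obtain ⟨σ, hσH, hσ⟩ := step2 c⁻¹
  have h5 : σ • c = 1 := by
    have h6 := (hcob σ hσH).symm.trans hσ
    -- σ • c * c⁻¹ = c⁻¹
    have h7 : σ • c * c⁻¹ = 1 * c⁻¹ := by rw [h6, one_mul]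
    exact mul_right_cancel h7
  have hc1 : c = 1 := by
    have h8 := congrArg (σ⁻¹ • ·) h5
    simpa using h8
  obtain ⟨s, hs⟩ := exists_ne (1 : S)
  obtain ⟨h, hhH, hhs⟩ := step2 s
  have h9 := hcob h hhH
  rw [hc1, smul_one, one_mul, inv_one] at h9
  exact hs (by rw [← hhs, h9])



theorem mem_Kker (η : Γ → 𝔊) (hcoc : ∀ σ τ : Γ, η (σ * τ) = η σ * σ • η τ) (a : Subgroup 𝔊)
    (hainv : ∀ (γ : Γ) (g : 𝔊), g ∈ a → γ • g ∈ a) (γ : Γ) :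
    γ ∈ Kker η hcoc a hainv ↔ η γ ∈ a := Iff.rfl

theorem keyF [Finite Γ] [Finite 𝔊] (η : Γ → 𝔊)
    (hcoc : ∀ σ τ : Γ, η (σ * τ) = η σ * σ • η τ)
    (hgen : Subgroup.closure (Set.range η) = ⊤)
    (hmin : ∀ a : Subgroup 𝔊, a.Normal → (∀ (γ : Γ) (g : 𝔊), g ∈ a → γ • g ∈ a) → a ≠ ⊥ →
        Function.Surjective (fun γ : Γ => (QuotientGroup.mk (η γ) : 𝔊 ⧸ a)))
    {p : ℕ} (hp : p.Prime) (hpG : IsPGroup p 𝔊)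
    (hfaith : ∀ x : Γ, (∀ g : 𝔊, x • g = g) → x = 1)
    (hF : FixedPoints.subgroup Γ 𝔊 ≠ ⊥) :
    Nat.card (FixedPoints.subgroup Γ 𝔊) = p ∧ Nat.card 𝔊 = p * Nat.card Γ := by
  haveI : Fact p.Prime := ⟨hp⟩
  set F := FixedPoints.subgroup Γ 𝔊 with hFdef
  have hFinv : ∀ (γ : Γ) (g : 𝔊), g ∈ F → γ • g ∈ F := by
    intro γ g hg δ
    rw [smul_smul, mul_comm, ← smul_smul, hg δ]
  have hK : ∀ κ : Γ, η κ ∈ F → κ = 1 := by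
    intro κ hκ
    apply hfaith
    apply fixes_all η hgen
    intro σ
    have h := coc_comm η hcoc σ κ
    rw [hκ σ, mul_comm (η κ) (κ • η σ)] at h
    exact (mul_right_cancel h).symm
  have hsurjF := hmin F inferInstance hFinv hF
  have hcnt := card_eq_K_mul_quot η hcoc F hFinv hsurjF
  have hKbot : Kker η hcoc F hFinv = ⊥ := by
    rw [Subgroup.eq_bot_iff_forall]
    intro κ hκmem
    exact hK κ ((mem_Kker η hcoc F hFinv κ).mp hκmem)
  rw [hKbot, Subgroup.card_bot, mul_one] at hcnt
  have hGF : Nat.card 𝔊 = Nat.card (𝔊 ⧸ F) * Nat.card F :=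
    Subgroup.card_eq_card_quotient_mul_card_subgroup F
  have hFnt : Nontrivial F := (Subgroup.nontrivial_iff_ne_bot F).mpr hF
  have hpF : p ∣ Nat.card F := by
    obtain ⟨j, hj⟩ := IsPGroup.exists_card_eq (hpG.to_subgroup F)
    rcases Nat.eq_zero_or_pos j with rfl | hj0
    · rw [pow_zero] at hj
      exact absurd hj (Finite.one_lt_card_iff_nontrivial.mpr hFnt).ne'
    · exact hj ▸ dvd_pow_self p hj0.ne'
  obtain ⟨x, hx⟩ := exists_prime_orderOf_dvd_card' (G := F) p hpF
  have hxo : orderOf (x : 𝔊) = p := by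
    rw [← hx]
    exact orderOf_injective F.subtype Subtype.coe_injective x
  have hx1 : (x : 𝔊) ≠ 1 := by
    intro h
    rw [h, orderOf_one] at hxo
    exact hp.ne_one hxo.symm
  set b := Subgroup.zpowers (x : 𝔊) with hb
  have hbinv : ∀ (γ : Γ) (g : 𝔊), g ∈ b → γ • g ∈ b := by
    intro γ g hg
    rw [hb, Subgroup.mem_zpowers_iff] at hg
    obtain ⟨k, rfl⟩ := hg
    have hz : γ • ((x : 𝔊) ^ k) = (γ • (x : 𝔊)) ^ k := by
      have := map_zpow (MulDistribMulAction.toMonoidHom 𝔊 γ) (x : 𝔊) k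
      simpa using this
    rw [hz, x.2 γ]
    exact Subgroup.zpow_mem b (Subgroup.mem_zpowers _) k
  have hbne : b ≠ ⊥ := by
    intro h
    have hxb := Subgroup.mem_zpowers (x : 𝔊)
    rw [← hb] at hxb
    rw [h] at hxb
    exact hx1 (Subgroup.mem_bot.mp hxb)
  have hsurjb := hmin b inferInstance hbinv hbne
  have hcntb := card_eq_K_mul_quot η hcoc b hbinv hsurjb
  have hcb : Nat.card b = p := by rw [hb, Nat.card_zpowers, hxo]
  have hGb : Nat.card 𝔊 = Nat.card (𝔊 ⧸ b) * Nat.card b :=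
    Subgroup.card_eq_card_quotient_mul_card_subgroup b
  have hqb0 : 0 < Nat.card (𝔊 ⧸ b) := Nat.card_pos
  have hkey : Nat.card (Kker η hcoc b hbinv) * Nat.card F = p := by
    have h1 : Nat.card (𝔊 ⧸ b) * (Nat.card (Kker η hcoc b hbinv) * Nat.card F)
        = Nat.card (𝔊 ⧸ b) * p := by
      calc Nat.card (𝔊 ⧸ b) * (Nat.card (Kker η hcoc b hbinv) * Nat.card F)
          = (Nat.card (𝔊 ⧸ b) * Nat.card (Kker η hcoc b hbinv)) * Nat.card F := by ring
        _ = Nat.card Γ * Nat.card F := by rw [← hcntb]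
        _ = Nat.card (𝔊 ⧸ F) * Nat.card F := by rw [hcnt]
        _ = Nat.card 𝔊 := hGF.symm
        _ = Nat.card (𝔊 ⧸ b) * Nat.card b := hGb
        _ = Nat.card (𝔊 ⧸ b) * p := by rw [hcb]
    exact Nat.eq_of_mul_eq_mul_left hqb0 h1
  have hcF1 : Nat.card F ≠ 1 :=
    (Finite.one_lt_card_iff_nontrivial.mpr hFnt).ne'
  have hcFp : Nat.card F = p := by
    have hdvd : Nat.card F ∣ p := ⟨Nat.card (Kker η hcoc b hbinv), by rw [← hkey]; ring⟩
    rcases hp.eq_one_or_self_of_dvd _ hdvd with h | h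
    · exact absurd h hcF1
    · exact h
  refine ⟨hcFp, ?_⟩
  rw [hGF, ← hcnt, hcFp, mul_comm]


end MNK


open MNK in
/-- Let `(Γ, 𝔊, η)` be a minimal non-Kneser triple with both `Γ` and `𝔊` abelian.  Then:
(1) `𝔊` is an abelian `p`-group for some prime `p`, `Γ` acts faithfully on `𝔊`, and `η` is
injective;
(2) the following are equivalent: `Γ` is a `p`-group; `𝔊^Γ ≠ {1}`; `𝔊^Γ` is cyclic of order
`p`; `|𝔊| = p·|Γ|`;
(3) `𝔊` has a unique minimal nontrivial `Γ`-invariant subgroup. -/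
theorem minimal_nonKneser_abelian
    {Γ 𝔊 : Type*} [CommGroup Γ] [Finite Γ] [CommGroup 𝔊] [Finite 𝔊]
    [MulDistribMulAction Γ 𝔊] (η : Γ → 𝔊)
    (hcoc : ∀ σ τ : Γ, η (σ * τ) = η σ * σ • η τ)
    (hgen : Subgroup.closure (Set.range η) = ⊤)
    (hns : ¬ Function.Surjective η)
    (hmin : ∀ a : Subgroup 𝔊, a.Normal → (∀ (γ : Γ) (g : 𝔊), g ∈ a → γ • g ∈ a) → a ≠ ⊥ →
        Function.Surjective (fun γ : Γ => (QuotientGroup.mk (η γ) : 𝔊 ⧸ a)))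
    (hnorm : ∀ x : Γ, (∀ g : 𝔊, x • g = g) → η x = 1 → x = 1) :
    ∃ p : ℕ, p.Prime ∧
      -- (1)
      IsPGroup p 𝔊 ∧
      (∀ x : Γ, (∀ g : 𝔊, x • g = g) → x = 1) ∧
      Function.Injective η ∧
      -- (2)
      List.TFAE
        [IsPGroup p Γ,
         FixedPoints.subgroup Γ 𝔊 ≠ ⊥,
         IsCyclic (FixedPoints.subgroup Γ 𝔊) ∧ Nat.card (FixedPoints.subgroup Γ 𝔊) = p,
         Nat.card 𝔊 = p * Nat.card Γ] ∧
      -- (3)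
      (∃! m : Subgroup 𝔊, m ≠ ⊥ ∧ (∀ (γ : Γ) (g : 𝔊), g ∈ m → γ • g ∈ m) ∧
        ∀ m' : Subgroup 𝔊, m' ≠ ⊥ → (∀ (γ : Γ) (g : 𝔊), g ∈ m' → γ • g ∈ m') →
          m' ≤ m → m' = m) := by
  classical
  have hnt : Nontrivial 𝔊 := nontrivial_G η hns
  have hfaith : ∀ x : Γ, (∀ g : 𝔊, x • g = g) → x = 1 :=
    faithful η hcoc hgen hns hmin hnorm
  have hinj : Function.Injective η := eta_inj η hcoc hgen hnorm
  have hltc : Nat.card Γ < Nat.card 𝔊 := card_lt η hinj hns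
  obtain ⟨p, hp, hpG⟩ := exists_p η hcoc hmin hltc hnt
  haveI : Fact p.Prime := ⟨hp⟩
  have hkeyF : FixedPoints.subgroup Γ 𝔊 ≠ ⊥ →
      Nat.card (FixedPoints.subgroup Γ 𝔊) = p ∧ Nat.card 𝔊 = p * Nat.card Γ :=
    fun hF => keyF η hcoc hgen hmin hp hpG hfaith hF
  -- the p-torsion subgroup of Γ
  set ΔP : Subgroup Γ :=
    { carrier := {γ : Γ | ∃ k : ℕ, γ ^ p ^ k = 1}
      one_mem' := ⟨0, by simp⟩
      mul_mem' := by
        rintro x y ⟨k, hk⟩ ⟨l, hl⟩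
        refine ⟨k + l, ?_⟩
        rw [mul_pow, pow_add, pow_mul, hk, one_pow, mul_comm (p ^ k) (p ^ l), pow_mul, hl,
          one_pow, one_mul]
      inv_mem' := by
        rintro x ⟨k, hk⟩
        exact ⟨k, by rw [inv_pow, hk, inv_one]⟩ } with hΔPdef
  have hΔPp : IsPGroup p ΔP := by
    intro x
    obtain ⟨k, hk⟩ := x.2
    exact ⟨k, Subtype.ext (by simpa using hk)⟩
  -- TFAE
  have htfae : List.TFAE [IsPGroup p Γ, FixedPoints.subgroup Γ 𝔊 ≠ ⊥,
      IsCyclic (FixedPoints.subgroup Γ 𝔊) ∧ Nat.card (FixedPoints.subgroup Γ 𝔊) = p,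
      Nat.card 𝔊 = p * Nat.card Γ] := by
    tfae_have 1 → 2 := by
      intro h1
      obtain ⟨s, hs1, hsfix⟩ := exists_fixed (M := 𝔊) hp hpG hnt ⊤ (h1.to_subgroup ⊤)
      intro hbot
      apply hs1
      have hsF : s ∈ FixedPoints.subgroup Γ 𝔊 := fun γ => hsfix γ trivial
      rw [hbot] at hsF
      exact Subgroup.mem_bot.mp hsF
    tfae_have 2 → 3 := by
      intro h2
      obtain ⟨hFp, _⟩ := hkeyF h2
      exact ⟨isCyclic_of_prime_card hFp, hFp⟩
    tfae_have 3 → 4 := by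
      intro h3
      refine (hkeyF ?_).2
      intro hbot
      rw [hbot] at h3
      have h4 := h3.2
      rw [Subgroup.card_bot] at h4
      exact hp.one_lt.ne' h4.symm
    tfae_have 4 → 1 := by
      intro h4
      obtain ⟨e, he⟩ := IsPGroup.exists_card_eq hpG
      have he1 : e ≠ 0 := by
        intro h
        rw [h, pow_zero] at he
        exact (Finite.one_lt_card_iff_nontrivial.mpr hnt).ne' he
      have hcard : Nat.card Γ = p ^ (e - 1) := by
        have h5 : p * Nat.card Γ = p * p ^ (e - 1) := by
          rw [← h4, he, ← pow_succ']
          congr 1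
          omega
        exact Nat.eq_of_mul_eq_mul_left hp.pos h5
      exact IsPGroup.of_card hcard
    tfae_finish
  refine ⟨p, hp, hpG, hfaith, hinj, htfae, ?_⟩
  -- Part (3)
  have htopne : (⊤ : Subgroup 𝔊) ≠ ⊥ := by
    intro h
    obtain ⟨g, hg⟩ := exists_ne (1 : 𝔊)
    have : g ∈ (⊤ : Subgroup 𝔊) := Subgroup.mem_top g
    rw [h] at this
    exact hg (Subgroup.mem_bot.mp this)
  set I : Set (Subgroup 𝔊) := {a | a ≠ ⊥ ∧ ∀ (γ : Γ) (g : 𝔊), g ∈ a → γ • g ∈ a} with hI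
  have htopI : (⊤ : Subgroup 𝔊) ∈ I := ⟨htopne, fun _ _ _ => Subgroup.mem_top _⟩
  obtain ⟨m0, hm0I, hm0min⟩ := Set.exists_min_image I (fun a : Subgroup 𝔊 => Nat.card a) (Set.toFinite I) ⟨⊤, htopI⟩
  have hm0prop : m0 ≠ ⊥ ∧ (∀ (γ : Γ) (g : 𝔊), g ∈ m0 → γ • g ∈ m0) ∧
      ∀ m' : Subgroup 𝔊, m' ≠ ⊥ → (∀ (γ : Γ) (g : 𝔊), g ∈ m' → γ • g ∈ m') →
        m' ≤ m0 → m' = m0 := by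
    refine ⟨hm0I.1, hm0I.2, ?_⟩
    intro m' h1 h2 hle
    exact Subgroup.eq_of_le_of_card_ge hle (hm0min m' ⟨h1, h2⟩)
  refine ⟨m0, hm0prop, ?_⟩
  intro m' hm'
  by_cases hF : FixedPoints.subgroup Γ 𝔊 = ⊥
  · -- fixed points trivial: 𝔊 is a simple module
    have hsimple : ∀ a : Subgroup 𝔊, a ≠ ⊥ → (∀ (γ : Γ) (g : 𝔊), g ∈ a → γ • g ∈ a) →
        a = ⊤ := by
      have hHbot : ∀ g : 𝔊, (∀ h : Γ, ¬ p ∣ orderOf h → h • g = g) → g = 1 := by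
        intro g hg
        set C : Subgroup 𝔊 :=
          { carrier := {x : 𝔊 | ∀ h : Γ, ¬ p ∣ orderOf h → h • x = x}
            one_mem' := fun h _ => smul_one h
            mul_mem' := by
              intro x y hx hy h hh
              rw [smul_mul', hx h hh, hy h hh]
            inv_mem' := by
              intro x hx h hh
              rw [smul_inv', hx h hh] } with hC
        by_cases hCbot : C = ⊥
        · have hgC : g ∈ C := hg
          rw [hCbot] at hgC
          exact Subgroup.mem_bot.mp hgC
        · exfalso
          have hCinv : ∀ (γ : Γ) (x : 𝔊), x ∈ C → γ • x ∈ C := by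
            intro γ x hx h hh
            rw [smul_smul, mul_comm, ← smul_smul, hx h hh]
          letI := subAction C hCinv
          have hntC : Nontrivial C := (Subgroup.nontrivial_iff_ne_bot C).mpr hCbot
          obtain ⟨s, hs1, hsfix⟩ := exists_fixed hp (hpG.to_subgroup C) hntC ΔP hΔPp
          have hall : ∀ γ : Γ, γ • (s : 𝔊) = (s : 𝔊) := by
            intro γ
            obtain ⟨h, π, rfl, hh, hπ⟩ := prime_decomp p hp γ
            rw [mul_smul]
            have hπs : π • (s : 𝔊) = (s : 𝔊) := congrArg Subtype.val (hsfix π hπ)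
            rw [hπs]
            exact s.2 h hh
          have hsF : (s : 𝔊) ∈ FixedPoints.subgroup Γ 𝔊 := fun γ => hall γ
          rw [hF] at hsF
          exact hs1 (Subtype.ext (Subgroup.mem_bot.mp hsF))
      intro a hane hainv
      by_contra hatop
      set J : Set (Subgroup 𝔊) := {c | c ≠ ⊥ ∧ c ≠ ⊤ ∧ ∀ (γ : Γ) (g : 𝔊), g ∈ c → γ • g ∈ c}
        with hJ
      have haJ : a ∈ J := ⟨hane, hatop, hainv⟩
      obtain ⟨b, hbJ, hbmax⟩ := Set.exists_max_image J (fun c : Subgroup 𝔊 => Nat.card c)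
        (Set.toFinite J) ⟨a, haJ⟩
      obtain ⟨hbne, hbtop, hbinv⟩ := hbJ
      letI := quotAction b hbinv
      have hSp : IsPGroup p (𝔊 ⧸ b) := hpG.to_quotient b
      have hSnt : Nontrivial (𝔊 ⧸ b) := by
        obtain ⟨g, hg⟩ : ∃ g : 𝔊, g ∉ b := by
          by_contra hall
          push_neg at hall
          exact hbtop ((Subgroup.eq_top_iff' b).mpr hall)
        refine ⟨QuotientGroup.mk g, 1, ?_⟩
        rw [ne_eq, QuotientGroup.eq_one_iff]
        exact hg
      have hsurjS := hmin b inferInstance hbinv hbne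
      have hcocS : ∀ σ τ : Γ, (QuotientGroup.mk (η (σ * τ)) : 𝔊 ⧸ b)
          = QuotientGroup.mk (η σ) * σ • QuotientGroup.mk (η τ) := by
        intro σ τ
        rw [quot_smul_mk b hbinv, ← QuotientGroup.mk_mul, hcoc]
      have hPt : ∀ π : Γ, (∃ k : ℕ, π ^ p ^ k = 1) → ∀ s : 𝔊 ⧸ b, π • s = s := by
        set FixS : Subgroup (𝔊 ⧸ b) :=
          { carrier := {s : 𝔊 ⧸ b | ∀ π : Γ, (∃ k : ℕ, π ^ p ^ k = 1) → π • s = s}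
            one_mem' := fun π _ => smul_one π
            mul_mem' := by
              intro x y hx hy π hπ
              rw [smul_mul', hx π hπ, hy π hπ]
            inv_mem' := by
              intro x hx π hπ
              rw [smul_inv', hx π hπ] } with hFixS
        set B : Subgroup 𝔊 := FixS.comap (QuotientGroup.mk' b) with hB
        have hbB : b ≤ B := by
          intro g hg
          have hg1 : (QuotientGroup.mk g : 𝔊 ⧸ b) = 1 := (QuotientGroup.eq_one_iff g).mpr hg
          show (QuotientGroup.mk g : 𝔊 ⧸ b) ∈ FixS
          rw [hg1]
          exact FixS.one_mem
        have hBinv : ∀ (γ : Γ) (g : 𝔊), g ∈ B → γ • g ∈ B := by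
          intro γ g hg
          have hg' : ∀ π : Γ, (∃ k : ℕ, π ^ p ^ k = 1) →
              π • (QuotientGroup.mk g : 𝔊 ⧸ b) = QuotientGroup.mk g := hg
          show (QuotientGroup.mk (γ • g) : 𝔊 ⧸ b) ∈ FixS
          intro π hπ
          rw [← quot_smul_mk b hbinv γ g, smul_smul, mul_comm, ← smul_smul, hg' π hπ]
        have hBneb : B ≠ b := by
          obtain ⟨s, hs1, hsfix⟩ := exists_fixed hp hSp hSnt ΔP hΔPp
          obtain ⟨g, rfl⟩ := QuotientGroup.mk_surjective s
          intro hEq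
          have hgB : g ∈ B := by
            show (QuotientGroup.mk g : 𝔊 ⧸ b) ∈ FixS
            intro π hπ
            exact hsfix π hπ
          rw [hEq] at hgB
          exact hs1 ((QuotientGroup.eq_one_iff g).mpr hgB)
        have hBtop : B = ⊤ := by
          by_contra hBt
          have hBbot : B ≠ ⊥ := by
            intro h
            apply hbne
            rw [← le_bot_iff, ← h]
            exact hbB
          have h1 := hbmax B ⟨hBbot, hBt, hBinv⟩
          exact hBneb (Subgroup.eq_of_le_of_card_ge hbB h1).symm
        intro π hπ s
        obtain ⟨g, rfl⟩ := QuotientGroup.mk_surjective s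
        have hgB : g ∈ B := hBtop ▸ Subgroup.mem_top g
        exact hgB π hπ
      have hHf : ∀ s : 𝔊 ⧸ b, (∀ h : Γ, ¬ p ∣ orderOf h → h • s = s) → s = 1 := by
        intro s hs
        obtain ⟨g, rfl⟩ := QuotientGroup.mk_surjective s
        letI : Fintype (primeCompl (G := Γ) p hp) := Fintype.ofFinite _
        set u := Fintype.card (primeCompl (G := Γ) p hp) with hu
        set N : 𝔊 := ∏ h : primeCompl (G := Γ) p hp, (h : Γ) • g with hN
        have hNfix : ∀ σ : Γ, ¬ p ∣ orderOf σ → σ • N = N := by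
          intro σ hσ
          have hσH : σ ∈ primeCompl (G := Γ) p hp := hσ
          have h1 : σ • N = ∏ h : primeCompl (G := Γ) p hp, (σ * (h : Γ)) • g := by
            rw [hN]
            have hmp := map_prod (MulDistribMulAction.toMonoidHom 𝔊 σ)
              (fun h : primeCompl (G := Γ) p hp => (h : Γ) • g) Finset.univ
            simp only [MulDistribMulAction.toMonoidHom_apply, smul_smul] at hmp
            exact hmp
          rw [h1, hN]
          apply Fintype.prod_equiv (Equiv.mulLeft (⟨σ, hσH⟩ : primeCompl (G := Γ) p hp))
          intro h
          rfl
        have hN1 : N = 1 := hHbot N hNfix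
        have hmkN : (QuotientGroup.mk N : 𝔊 ⧸ b) = (QuotientGroup.mk g : 𝔊 ⧸ b) ^ u := by
          rw [hN]
          have hmp := map_prod (QuotientGroup.mk' b)
            (fun h : primeCompl (G := Γ) p hp => (h : Γ) • g) Finset.univ
          rw [show ((QuotientGroup.mk (∏ h : primeCompl (G := Γ) p hp, (h : Γ) • g)) : 𝔊 ⧸ b)
            = QuotientGroup.mk' b (∏ h : primeCompl (G := Γ) p hp, (h : Γ) • g) from rfl, hmp]
          have heach : ∀ h : primeCompl (G := Γ) p hp,
              QuotientGroup.mk' b ((h : Γ) • g) = QuotientGroup.mk g := by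
            intro h
            show (QuotientGroup.mk ((h : Γ) • g) : 𝔊 ⧸ b) = QuotientGroup.mk g
            rw [← quot_smul_mk b hbinv, hs (h : Γ) h.2]
          rw [Finset.prod_congr rfl (fun h _ => heach h), Finset.prod_const, Finset.card_univ]
        have hsu : (QuotientGroup.mk g : 𝔊 ⧸ b) ^ u = 1 := by
          rw [← hmkN, hN1, QuotientGroup.mk_one]
        obtain ⟨k, hk⟩ := IsPGroup.iff_orderOf.mp hSp (QuotientGroup.mk g)
        have hdvd : orderOf (QuotientGroup.mk g : 𝔊 ⧸ b) ∣ u := orderOf_dvd_of_pow_eq_one hsu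
        rw [hk] at hdvd
        have hpu : ¬ p ∣ u := by
          have hnd := not_dvd_card_primeCompl (G := Γ) p hp
          rwa [Nat.card_eq_fintype_card] at hnd
        have hk0 : k = 0 := by
          by_contra hk0
          exact hpu ((dvd_pow_self p hk0).trans hdvd)
        rw [hk0, pow_zero] at hk
        exact orderOf_eq_one_iff.mp hk
      exact no_surjective_cocycle hp hSp hSnt (fun γ => QuotientGroup.mk (η γ)) hcocS hsurjS
        hPt hHf

    rw [hsimple m' hm'.1 hm'.2.1, hsimple m0 hm0prop.1 hm0prop.2.1]
  · -- fixed points nontrivial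
    have hmeq : ∀ m : Subgroup 𝔊, m ≠ ⊥ → (∀ (γ : Γ) (g : 𝔊), g ∈ m → γ • g ∈ m) →
        (∀ m'' : Subgroup 𝔊, m'' ≠ ⊥ → (∀ (γ : Γ) (g : 𝔊), g ∈ m'' → γ • g ∈ m'') →
          m'' ≤ m → m'' = m) → m = FixedPoints.subgroup Γ 𝔊 := by
      intro m hne hinv hmin'
      letI := subAction m hinv
      have hPm : IsPGroup p m := hpG.to_subgroup m
      have hntm : Nontrivial m := (Subgroup.nontrivial_iff_ne_bot m).mpr hne
      have hΓp : IsPGroup p Γ := (htfae.out 1 0).mp hF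
      obtain ⟨s, hs1, hsfix⟩ := exists_fixed hp hPm hntm ⊤ (hΓp.to_subgroup ⊤)
      have hxm : (s : 𝔊) ∈ m := s.2
      have hx1 : (s : 𝔊) ≠ 1 := by
        intro h
        exact hs1 (Subtype.ext h)
      have hxfix : ∀ γ : Γ, γ • (s : 𝔊) = (s : 𝔊) := by
        intro γ
        exact congrArg Subtype.val (hsfix γ trivial)
      set b := Subgroup.zpowers (s : 𝔊) with hb
      have hbinv : ∀ (γ : Γ) (g : 𝔊), g ∈ b → γ • g ∈ b := by
        intro γ g hg
        rw [hb, Subgroup.mem_zpowers_iff] at hg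
        obtain ⟨k, rfl⟩ := hg
        have hz : γ • ((s : 𝔊) ^ k) = (γ • (s : 𝔊)) ^ k := by
          have hmz := map_zpow (MulDistribMulAction.toMonoidHom 𝔊 γ) (s : 𝔊) k
          simpa using hmz
        rw [hz, hxfix γ]
        exact Subgroup.zpow_mem b (Subgroup.mem_zpowers _) k
      have hbne : b ≠ ⊥ := by
        intro h
        have hxb := Subgroup.mem_zpowers (s : 𝔊)
        rw [← hb, h] at hxb
        exact hx1 (Subgroup.mem_bot.mp hxb)
      have hble : b ≤ m := by
        rw [hb]
        exact (Subgroup.zpowers_le).mpr hxm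
      have hbm : b = m := hmin' b hbne hbinv hble
      have hbF : b ≤ FixedPoints.subgroup Γ 𝔊 := by
        rw [hb]
        exact (Subgroup.zpowers_le).mpr (fun γ => hxfix γ)
      have hmF : m ≤ FixedPoints.subgroup Γ 𝔊 := hbm ▸ hbF
      have hFp : Nat.card (FixedPoints.subgroup Γ 𝔊) = p := (hkeyF hF).1
      apply Subgroup.eq_of_le_of_card_ge hmF
      have hdvd : Nat.card m ∣ p := hFp ▸ Subgroup.card_dvd_of_le hmF
      rcases hp.eq_one_or_self_of_dvd _ hdvd with h | h
      · exact absurd h (Finite.one_lt_card_iff_nontrivial.mpr hntm).ne'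
      · rw [hFp, h]
    rw [hmeq m' hm'.1 hm'.2.1 hm'.2.2, hmeq m0 hm0prop.1 hm0prop.2.1 hm0prop.2.2]
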